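/- In a stable configuration of the maximal matching algorithm, every node i satisfies PRmarried(i) or PRdead(i). -/

import Mathlib

structure Config (V : Type*) where
  p : V → Option V
  m : V → Bool

variable {V : Type*}

def PRmarried (G : SimpleGraph V) (p : V → Option V) (i : V) : Prop :=
  ∃ j, G.Adj i j ∧ p i = some j ∧ p j = some i

def PRwaiting (G : SimpleGraph V) (p : V → Option V) (i : V) : Prop :=
  ∃ j, G.Adj i j ∧ p i = some j ∧ p j ≠ some i ∧ ¬ PRmarried G p j

def PRcondemned (G : SimpleGraph V) (p : V → Option V) (i : V) : Prop :=
  ∃ j, G.Adj i j ∧ p i = some j ∧ p j ≠ some i ∧ PRmarried G p j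

def PRdead (G : SimpleGraph V) (p : V → Option V) (i : V) : Prop :=
  p i = none ∧ ∀ j, G.Adj i j → PRmarried G p j

def PRfree (G : SimpleGraph V) (p : V → Option V) (i : V) : Prop :=
  p i = none ∧ ∃ j, G.Adj i j ∧ ¬ PRmarried G p j

def Valid (G : SimpleGraph V) (C : Config V) : Prop :=
  ∀ i j, C.p i = some j → G.Adj i j

section Rules
variable [LinearOrder V]

def UpdateEnabled (G : SimpleGraph V) (C : Config V) (i : V) : Prop :=
  ¬ (C.m i = true ↔ PRmarried G C.p i)

def MarriageEnabled (G : SimpleGraph V) (C : Config V) (i : V) : Prop :=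
  (C.m i = true ↔ PRmarried G C.p i) ∧ C.p i = none ∧ ∃ j, G.Adj i j ∧ C.p j = some i

def SeductionEnabled (G : SimpleGraph V) (C : Config V) (i : V) : Prop :=
  (C.m i = true ↔ PRmarried G C.p i) ∧ C.p i = none ∧
    (∀ k, G.Adj i k → C.p k ≠ some i) ∧
    ∃ j, G.Adj i j ∧ C.p j = none ∧ i < j ∧ C.m j = false

def AbandonmentEnabled (G : SimpleGraph V) (C : Config V) (i : V) : Prop :=
  (C.m i = true ↔ PRmarried G C.p i) ∧
    ∃ j, G.Adj i j ∧ C.p i = some j ∧ C.p j ≠ some i ∧ (C.m j = true ∨ j ≤ i)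

def Eligible (G : SimpleGraph V) (C : Config V) (i : V) : Prop :=
  UpdateEnabled G C i ∨ MarriageEnabled G C i ∨ SeductionEnabled G C i ∨ AbandonmentEnabled G C i

def Stable (G : SimpleGraph V) (C : Config V) : Prop := ∀ i, ¬ Eligible G C i

def Unchanged (C C' : Config V) (i : V) : Prop := C'.p i = C.p i ∧ C'.m i = C.m i

def DoesUpdate (G : SimpleGraph V) (C C' : Config V) (i : V) : Prop :=
  UpdateEnabled G C i ∧ C'.p i = C.p i ∧ (C'.m i = true ↔ PRmarried G C.p i)

def DoesMarriageTo (G : SimpleGraph V) (C C' : Config V) (i j : V) : Prop :=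
  MarriageEnabled G C i ∧ G.Adj i j ∧ C.p j = some i ∧ C'.p i = some j ∧ C'.m i = C.m i

def DoesSeductionTo (G : SimpleGraph V) (C C' : Config V) (i j : V) : Prop :=
  SeductionEnabled G C i ∧ G.Adj i j ∧ C.p j = none ∧ i < j ∧ C.m j = false ∧
    (∀ k, G.Adj i k → C.p k = none → i < k → C.m k = false → k ≤ j) ∧
    C'.p i = some j ∧ C'.m i = C.m i

def DoesAbandonmentFrom (G : SimpleGraph V) (C C' : Config V) (i j : V) : Prop :=
  AbandonmentEnabled G C i ∧ C.p i = some j ∧ C'.p i = none ∧ C'.m i = C.m i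

def Moves (G : SimpleGraph V) (C C' : Config V) (i : V) : Prop :=
  DoesUpdate G C C' i ∨ (∃ j, DoesMarriageTo G C C' i j) ∨
    (∃ j, DoesSeductionTo G C C' i j) ∨ (∃ j, DoesAbandonmentFrom G C C' i j)

def Step (G : SimpleGraph V) (C C' : Config V) : Prop :=
  (∃ i, Moves G C C' i) ∧ ∀ i, Moves G C C' i ∨ Unchanged C C' i

def MSAMoveTo (G : SimpleGraph V) (C C' : Config V) (i j : V) : Prop :=
  DoesMarriageTo G C C' i j ∨ DoesSeductionTo G C C' i j ∨ DoesAbandonmentFrom G C C' i j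

def IJMove (G : SimpleGraph V) (C C' : Config V) (i j : V) : Prop :=
  MSAMoveTo G C C' i j ∨ MSAMoveTo G C C' j i

end Rules

theorem stable_married_or_dead [Fintype V] [LinearOrder V] (G : SimpleGraph V)
    (C : Config V) (hvalid : Valid G C) (hstable : Stable G C) :
    ∀ i, PRmarried G C.p i ∨ PRdead G C.p i := by
  have hmiff : ∀ i, (C.m i = true ↔ PRmarried G C.p i) := by
    intro i
    by_contra h
    exact hstable i (Or.inl h)
  -- Claim: anyone with a pointer is married
  have claim : ∀ i j, C.p i = some j → PRmarried G C.p i := by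
    intro i
    induction i using WellFoundedGT.induction with
    | _ i IH =>
      intro j hpi
      have hadj : G.Adj i j := hvalid i j hpi
      by_cases hpj : C.p j = some i
      · exact ⟨j, hadj, hpi, hpj⟩
      · exfalso
        -- abandonment not enabled at i
        have hnab : ¬ AbandonmentEnabled G C i := fun h =>
          hstable i (Or.inr (Or.inr (Or.inr h)))
        have hmj : ¬ (C.m j = true ∨ j ≤ i) := by
          intro h
          exact hnab ⟨hmiff i, j, hadj, hpi, hpj, h⟩
        push_neg at hmj
        obtain ⟨hmjf, hij⟩ := hmj
        have hmjf : C.m j = false := by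
          cases hb : C.m j with
          | true => exact absurd hb hmjf
          | false => rfl
        have hnmj : ¬ PRmarried G C.p j := by
          intro h
          have := (hmiff j).mpr h
          rw [hmjf] at this
          exact Bool.noConfusion this
        cases hpjc : C.p j with
        | none =>
          -- Marriage enabled at j
          exact hstable j (Or.inr (Or.inl ⟨hmiff j, hpjc, i, hadj.symm, hpi⟩))
        | some k =>
          exact hnmj (IH j hij k hpjc)
  intro i
  cases hpi : C.p i with
  | some j => exact Or.inl (claim i j hpi)
  | none =>
    by_cases hdead : ∀ j, G.Adj i j → PRmarried G C.p j
    · exact Or.inr ⟨hpi, hdead⟩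
    · exfalso
      push_neg at hdead
      obtain ⟨j, hadj, hnmj⟩ := hdead
      have hpj : C.p j = none := by
        cases hpjc : C.p j with
        | none => rfl
        | some k => exact absurd (claim j k hpjc) hnmj
      have hnmi : ¬ PRmarried G C.p i := by
        rintro ⟨k, _, hk, _⟩
        rw [hpi] at hk
        exact Option.some_ne_none k hk.symm
      have hmi : C.m i = false := by
        cases hb : C.m i with
        | true => exact absurd ((hmiff i).mp hb) hnmi
        | false => rfl
      have hmj : C.m j = false := by
        cases hb : C.m j with
        | true => exact absurd ((hmiff j).mp hb) hnmj
        | false => rfl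
      -- If someone points at i, Marriage at i; similarly for j; else Seduction
      by_cases hki : ∃ k, G.Adj i k ∧ C.p k = some i
      · exact hstable i (Or.inr (Or.inl ⟨hmiff i, hpi, hki⟩))
      by_cases hkj : ∃ k, G.Adj j k ∧ C.p k = some j
      · exact hstable j (Or.inr (Or.inl ⟨hmiff j, hpj, hkj⟩))
      push_neg at hki hkj
      rcases lt_trichotomy i j with hij | hij | hij
      · exact hstable i (Or.inr (Or.inr (Or.inl
          ⟨hmiff i, hpi, fun k hk => hki k hk, j, hadj, hpj, hij, hmj⟩)))
      · exact absurd hij hadj.ne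
      · exact hstable j (Or.inr (Or.inr (Or.inl
          ⟨hmiff j, hpj, fun k hk => hkj k hk, i, hadj.symm, hpi, hij, hmi⟩)))
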